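/- Controllability of the qubit control system with pulse-shaped controls: for every T > 0 and every unit quaternion q̄ ∈ ℍ, there exist continuously differentiable controls u1, u2 : [0, T] → ℝ with u1(0) = u2(0) = u1(T) = u2(T) = 0 and a differentiable curve q : [0, T] → ℍ satisfying q'(t) = (u1(t) e1 + u2(t) e2) · q(t) for all t ∈ [0, T], q(0) = 1 and q(T) = q̄. -/

import Mathlib

open Quaternion Set

/-- The imaginary quaternion unit `i`. -/
noncomputable def e1 : ℍ[ℝ] := ⟨0, 1, 0, 0⟩
/-- The imaginary quaternion unit `j`. -/
noncomputable def e2 : ℍ[ℝ] := ⟨0, 0, 1, 0⟩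
/-- The imaginary quaternion unit `k`. -/
noncomputable def e3 : ℍ[ℝ] := ⟨0, 0, 0, 1⟩

/-- `qexp φ = exp (φ e1) = cos φ + (sin φ) e1`. -/
noncomputable def qexp (φ : ℝ) : ℍ[ℝ] :=
  (Real.cos φ : ℍ[ℝ]) + (Real.sin φ : ℍ[ℝ]) * e1

@[simp] lemma e1_re : e1.re = 0 := rfl
@[simp] lemma e1_imI : e1.imI = 1 := rfl
@[simp] lemma e1_imJ : e1.imJ = 0 := rfl
@[simp] lemma e1_imK : e1.imK = 0 := rfl
@[simp] lemma e2_re : e2.re = 0 := rfl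
@[simp] lemma e2_imI : e2.imI = 0 := rfl
@[simp] lemma e2_imJ : e2.imJ = 1 := rfl
@[simp] lemma e2_imK : e2.imK = 0 := rfl

noncomputable def qexp2 (φ : ℝ) : ℍ[ℝ] :=
  (Real.cos φ : ℍ[ℝ]) + (Real.sin φ : ℍ[ℝ]) * e2

lemma qexp_zero : qexp 0 = 1 := by ext <;> simp [qexp, e1_re]

lemma qexp2_zero : qexp2 0 = 1 := by ext <;> simp [qexp2, e2_re]

lemma euler_prod (γ β α : ℝ) :
    qexp γ * (qexp2 β * qexp α) =
      ⟨Real.cos β * Real.cos (γ + α), Real.cos β * Real.sin (γ + α),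
        Real.sin β * Real.cos (γ - α), Real.sin β * Real.sin (γ - α)⟩ := by
  ext <;>
    simp [qexp, qexp2, e1_re, e2_re, Real.cos_add, Real.sin_add, Real.cos_sub, Real.sin_sub] <;>
    ring

lemma hasDerivAt_qexp (φ : ℝ) : HasDerivAt qexp (e1 * qexp φ) φ := by
  have h1 : qexp = fun x => Real.cos x • (1 : ℍ[ℝ]) + Real.sin x • e1 := by
    funext x
    simp [qexp, ← Quaternion.coe_mul_eq_smul]
  have h2 : HasDerivAt (fun x => Real.cos x • (1 : ℍ[ℝ]) + Real.sin x • e1)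
      ((-Real.sin φ) • (1 : ℍ[ℝ]) + Real.cos φ • e1) φ :=
    ((Real.hasDerivAt_cos φ).smul_const _).add ((Real.hasDerivAt_sin φ).smul_const _)
  rw [h1]
  convert h2 using 1
  ext <;> simp [qexp, e1_re, ← Quaternion.coe_mul_eq_smul]

lemma hasDerivAt_qexp2 (φ : ℝ) : HasDerivAt qexp2 (e2 * qexp2 φ) φ := by
  have h1 : qexp2 = fun x => Real.cos x • (1 : ℍ[ℝ]) + Real.sin x • e2 := by
    funext x
    simp [qexp2, ← Quaternion.coe_mul_eq_smul]
  have h2 : HasDerivAt (fun x => Real.cos x • (1 : ℍ[ℝ]) + Real.sin x • e2)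
      ((-Real.sin φ) • (1 : ℍ[ℝ]) + Real.cos φ • e2) φ :=
    ((Real.hasDerivAt_cos φ).smul_const _).add ((Real.hasDerivAt_sin φ).smul_const _)
  rw [h1]
  convert h2 using 1
  ext <;> simp [qexp2, e2_re, ← Quaternion.coe_mul_eq_smul]

lemma euler_exists (qb : ℍ[ℝ]) (hqb : ‖qb‖ = 1) :
    ∃ α β γ : ℝ, qexp γ * (qexp2 β * qexp α) = qb := by
  set a := qb.re with ha
  set b := qb.imI with hb
  set c := qb.imJ with hc
  set d := qb.imK with hd
  have hsum : a ^ 2 + b ^ 2 + c ^ 2 + d ^ 2 = 1 := by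
    have h1 : Quaternion.normSq qb = ‖qb‖ * ‖qb‖ := Quaternion.normSq_eq_norm_mul_self qb
    rw [hqb, Quaternion.normSq_def'] at h1
    linarith
  set z1 : ℂ := ⟨a, b⟩ with hz1
  set z2 : ℂ := ⟨c, d⟩ with hz2
  have habs1 : (‖z1‖) ^ 2 = a ^ 2 + b ^ 2 := by
    rw [Complex.sq_norm, Complex.normSq_apply]; ring
  have habs2 : (‖z2‖) ^ 2 = c ^ 2 + d ^ 2 := by
    rw [Complex.sq_norm, Complex.normSq_apply]; ring
  set r2 := ‖z2‖ with hr2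
  have hr2n : 0 ≤ r2 := norm_nonneg z2
  have hr2le : r2 ≤ 1 := by nlinarith [norm_nonneg z1, habs1, habs2]
  set β := Real.arcsin r2 with hβ
  have hsinβ : Real.sin β = r2 := Real.sin_arcsin (by linarith) hr2le
  have hcosβ : Real.cos β = ‖z1‖ := by
    rw [hβ, Real.cos_arcsin]
    have : 1 - r2 ^ 2 = (‖z1‖) ^ 2 := by nlinarith
    rw [this, Real.sqrt_sq (norm_nonneg z1)]
  set φ := Complex.arg z1 with hφ
  set ψ := Complex.arg z2 with hψ
  refine ⟨(φ - ψ) / 2, β, (φ + ψ) / 2, ?_⟩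
  have hγα : (φ + ψ) / 2 + (φ - ψ) / 2 = φ := by ring
  have hγα' : (φ + ψ) / 2 - (φ - ψ) / 2 = ψ := by ring
  rw [euler_prod, hγα, hγα']
  ext
  · show Real.cos β * Real.cos φ = a
    rw [hcosβ]; exact Complex.norm_mul_cos_arg z1
  · show Real.cos β * Real.sin φ = b
    rw [hcosβ]; exact Complex.norm_mul_sin_arg z1
  · show Real.sin β * Real.cos ψ = c
    rw [hsinβ]; exact Complex.norm_mul_cos_arg z2
  · show Real.sin β * Real.sin ψ = d
    rw [hsinβ]; exact Complex.norm_mul_sin_arg z2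

lemma st_ev_zero {w : ℝ → ℝ} (hw : Continuous w) {t : ℝ} (h : w t < 0) :
    (fun s => Real.smoothTransition (w s)) =ᶠ[nhds t] fun _ => 0 := by
  have h1 : ∀ᶠ s in nhds t, w s ∈ Iio (0:ℝ) :=
    hw.continuousAt.preimage_mem_nhds (Iio_mem_nhds h)
  filter_upwards [h1] with s hs
  exact Real.smoothTransition.zero_of_nonpos hs.le

lemma st_ev_one {w : ℝ → ℝ} (hw : Continuous w) {t : ℝ} (h : 1 < w t) :
    (fun s => Real.smoothTransition (w s)) =ᶠ[nhds t] fun _ => 1 := by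
  have h1 : ∀ᶠ s in nhds t, w s ∈ Ioi (1:ℝ) :=
    hw.continuousAt.preimage_mem_nhds (Ioi_mem_nhds h)
  filter_upwards [h1] with s hs
  exact Real.smoothTransition.one_of_one_le hs.le

lemma st_deriv_zero_of_neg {x : ℝ} (h : x < 0) : deriv Real.smoothTransition x = 0 := by
  have h1 : Real.smoothTransition =ᶠ[nhds x] fun _ => 0 := st_ev_zero continuous_id h
  rw [h1.deriv_eq, deriv_const]

lemma st_deriv_zero_of_gt {x : ℝ} (h : 1 < x) : deriv Real.smoothTransition x = 0 := by
  have h1 : Real.smoothTransition =ᶠ[nhds x] fun _ => 1 := st_ev_one continuous_id h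
  rw [h1.deriv_eq, deriv_const]

lemma st_contDiff_deriv : ContDiff ℝ 1 (deriv Real.smoothTransition) :=
  ((contDiff_infty_iff_deriv.mp Real.smoothTransition.contDiff).2).of_le (by exact_mod_cast le_top)

lemma st_hasDerivAt (x : ℝ) :
    HasDerivAt Real.smoothTransition (deriv Real.smoothTransition x) x :=
  ((Real.smoothTransition.contDiff (n := 1)).differentiable (by norm_num) x).hasDerivAt

theorem stmt_16 (T : ℝ) (hT : 0 < T) (qb : ℍ[ℝ]) (hqb : ‖qb‖ = 1) :
    ∃ u1 u2 : ℝ → ℝ, ∃ q : ℝ → ℍ[ℝ],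
      ContDiffOn ℝ 1 u1 (Icc (0:ℝ) T) ∧ ContDiffOn ℝ 1 u2 (Icc (0:ℝ) T) ∧
      u1 0 = 0 ∧ u2 0 = 0 ∧ u1 T = 0 ∧ u2 T = 0 ∧
      (∀ t ∈ Icc (0:ℝ) T,
        HasDerivAt q ((((u1 t : ℝ) : ℍ[ℝ]) * e1 + ((u2 t : ℝ) : ℍ[ℝ]) * e2) * q t) t) ∧
      q 0 = 1 ∧ q T = qb := by
  obtain ⟨α, β, γ, hdec⟩ := euler_exists qb hqb
  have hT' : T ≠ 0 := hT.ne'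
  have h8T : (0:ℝ) < 8 / T := by positivity
  have hlt : ∀ {x c : ℝ}, 8 * x < c * T → 8 / T * x - c < 0 := by
    intro x c h
    rw [sub_neg, div_mul_eq_mul_div, div_lt_iff₀ hT]
    linarith
  have hgt : ∀ {x c : ℝ}, (c + 1) * T < 8 * x → 1 < 8 / T * x - c := by
    intro x c h
    rw [lt_sub_iff_add_lt, div_mul_eq_mul_div, lt_div_iff₀ hT]
    linarith
  have hwc : ∀ c : ℝ, Continuous (fun t : ℝ => 8 / T * t - c) := by
    intro c; continuity
  have hwcd : ∀ c : ℝ, ContDiff ℝ 1 (fun t : ℝ => 8 / T * t - c) := by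
    intro c; exact (contDiff_const.mul contDiff_id).sub contDiff_const
  have hwd : ∀ c t : ℝ, HasDerivAt (fun s : ℝ => 8 / T * s - c) (8 / T) t := by
    intro c t
    simpa using ((hasDerivAt_id t).const_mul (8 / T)).sub_const c
  have hD1 : ContDiff ℝ 1 (deriv Real.smoothTransition) := st_contDiff_deriv
  refine ⟨fun t => α * (8 / T * deriv Real.smoothTransition (8 / T * t - 1)) +
      γ * (8 / T * deriv Real.smoothTransition (8 / T * t - 6)),
    fun t => β * (8 / T * deriv Real.smoothTransition (8 / T * t - 3)),
    fun t => qexp (γ * Real.smoothTransition (8 / T * t - 6)) *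
      (qexp2 (β * Real.smoothTransition (8 / T * t - 3)) *
        qexp (α * Real.smoothTransition (8 / T * t - 1))),
    ?_, ?_, ?_, ?_, ?_, ?_, ?_, ?_, ?_⟩
  · exact ((contDiff_const.mul (contDiff_const.mul (hD1.comp (hwcd 1)))).add
      (contDiff_const.mul (contDiff_const.mul (hD1.comp (hwcd 6))))).contDiffOn
  · exact (contDiff_const.mul (contDiff_const.mul (hD1.comp (hwcd 3)))).contDiffOn
  · beta_reduce
    rw [show (8:ℝ) / T * 0 - 1 = -1 by ring, show (8:ℝ) / T * 0 - 6 = -6 by ring,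
      st_deriv_zero_of_neg (by norm_num), st_deriv_zero_of_neg (by norm_num)]
    ring
  · beta_reduce
    rw [show (8:ℝ) / T * 0 - 3 = -3 by ring, st_deriv_zero_of_neg (by norm_num)]
    ring
  · beta_reduce
    rw [show (8:ℝ) / T * T = 8 by field_simp,
      st_deriv_zero_of_gt (by norm_num : (1:ℝ) < 8 - 1),
      st_deriv_zero_of_gt (by norm_num : (1:ℝ) < 8 - 6)]
    ring
  · beta_reduce
    rw [show (8:ℝ) / T * T = 8 by field_simp,
      st_deriv_zero_of_gt (by norm_num : (1:ℝ) < 8 - 3)]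
    ring
  · intro t ht
    rcases lt_or_ge t (3 * T / 8) with hA | h1
    · -- Case A : only the `α`-rotation is active
      have h6 : 8 / T * t - 6 < 0 := hlt (by nlinarith)
      have h3 : 8 / T * t - 3 < 0 := hlt (by nlinarith)
      have hqe : (fun s => qexp (γ * Real.smoothTransition (8 / T * s - 6)) *
          (qexp2 (β * Real.smoothTransition (8 / T * s - 3)) *
            qexp (α * Real.smoothTransition (8 / T * s - 1)))) =ᶠ[nhds t]
          fun s => qexp (α * Real.smoothTransition (8 / T * s - 1)) := by
        filter_upwards [st_ev_zero (hwc 6) h6, st_ev_zero (hwc 3) h3] with s h6s h3s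
        rw [h6s, h3s, mul_zero, mul_zero, qexp_zero, qexp2_zero, one_mul, one_mul]
      rw [hqe.hasDerivAt_iff]
      have hH : HasDerivAt (fun s => α * Real.smoothTransition (8 / T * s - 1))
          (α * (8 / T * deriv Real.smoothTransition (8 / T * t - 1))) t := by
        have := ((st_hasDerivAt (8 / T * t - 1)).comp t (hwd 1 t)).const_mul α
        simpa [Function.comp, mul_comm] using this
      have hq1 : HasDerivAt (fun s => qexp (α * Real.smoothTransition (8 / T * s - 1)))
          ((α * (8 / T * deriv Real.smoothTransition (8 / T * t - 1))) •
            (e1 * qexp (α * Real.smoothTransition (8 / T * t - 1)))) t :=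
        (hasDerivAt_qexp _).scomp t hH
      convert hq1 using 1
      case e'_4 => rfl
      case e'_5 => rfl
      beta_reduce
      rw [st_deriv_zero_of_neg h6, st_deriv_zero_of_neg h3,
        Real.smoothTransition.zero_of_nonpos h6.le, Real.smoothTransition.zero_of_nonpos h3.le]
      simp only [mul_zero, zero_mul, add_zero, zero_add, mul_one, one_mul, Quaternion.coe_zero,
        qexp_zero, qexp2_zero, mul_assoc, smul_mul_assoc, Quaternion.coe_mul_eq_smul]
    rcases le_or_gt t (T / 2) with hB | hC
    · -- Case B : only the `β`-rotation is active
      have hg1 : 1 < 8 / T * t - 1 := hgt (by nlinarith)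
      have h6 : 8 / T * t - 6 < 0 := hlt (by nlinarith)
      have hqe : (fun s => qexp (γ * Real.smoothTransition (8 / T * s - 6)) *
          (qexp2 (β * Real.smoothTransition (8 / T * s - 3)) *
            qexp (α * Real.smoothTransition (8 / T * s - 1)))) =ᶠ[nhds t]
          fun s => qexp2 (β * Real.smoothTransition (8 / T * s - 3)) * qexp α := by
        filter_upwards [st_ev_zero (hwc 6) h6, st_ev_one (hwc 1) hg1] with s h6s h1s
        rw [h6s, h1s, mul_zero, mul_one, qexp_zero, one_mul]
      rw [hqe.hasDerivAt_iff]
      have hG : HasDerivAt (fun s => β * Real.smoothTransition (8 / T * s - 3))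
          (β * (8 / T * deriv Real.smoothTransition (8 / T * t - 3))) t := by
        have := ((st_hasDerivAt (8 / T * t - 3)).comp t (hwd 3 t)).const_mul β
        simpa [Function.comp, mul_comm] using this
      have hq1 : HasDerivAt (fun s => qexp2 (β * Real.smoothTransition (8 / T * s - 3)))
          ((β * (8 / T * deriv Real.smoothTransition (8 / T * t - 3))) •
            (e2 * qexp2 (β * Real.smoothTransition (8 / T * t - 3)))) t :=
        (hasDerivAt_qexp2 _).scomp t hG
      have hq2 := hq1.mul_const (qexp α)
      convert hq2 using 1
      case e'_4 => rfl
      beta_reduce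
      rw [st_deriv_zero_of_gt hg1, st_deriv_zero_of_neg h6,
        Real.smoothTransition.zero_of_nonpos h6.le, Real.smoothTransition.one_of_one_le hg1.le]
      simp only [mul_zero, zero_mul, add_zero, zero_add, mul_one, one_mul, Quaternion.coe_zero,
        qexp_zero, qexp2_zero, mul_assoc, smul_mul_assoc, Quaternion.coe_mul_eq_smul]
    · -- Case C : only the `γ`-rotation is active
      have hg1 : 1 < 8 / T * t - 1 := hgt (by nlinarith)
      have hg3 : 1 < 8 / T * t - 3 := hgt (by nlinarith)
      have hqe : (fun s => qexp (γ * Real.smoothTransition (8 / T * s - 6)) *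
          (qexp2 (β * Real.smoothTransition (8 / T * s - 3)) *
            qexp (α * Real.smoothTransition (8 / T * s - 1)))) =ᶠ[nhds t]
          fun s => qexp (γ * Real.smoothTransition (8 / T * s - 6)) *
            (qexp2 β * qexp α) := by
        filter_upwards [st_ev_one (hwc 3) hg3, st_ev_one (hwc 1) hg1] with s h3s h1s
        rw [h3s, h1s, mul_one, mul_one]
      rw [hqe.hasDerivAt_iff]
      have hF : HasDerivAt (fun s => γ * Real.smoothTransition (8 / T * s - 6))
          (γ * (8 / T * deriv Real.smoothTransition (8 / T * t - 6))) t := by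
        have := ((st_hasDerivAt (8 / T * t - 6)).comp t (hwd 6 t)).const_mul γ
        simpa [Function.comp, mul_comm] using this
      have hq1 : HasDerivAt (fun s => qexp (γ * Real.smoothTransition (8 / T * s - 6)))
          ((γ * (8 / T * deriv Real.smoothTransition (8 / T * t - 6))) •
            (e1 * qexp (γ * Real.smoothTransition (8 / T * t - 6)))) t :=
        (hasDerivAt_qexp _).scomp t hF
      have hq2 := hq1.mul_const (qexp2 β * qexp α)
      convert hq2 using 1
      case e'_4 => rfl
      beta_reduce
      rw [st_deriv_zero_of_gt hg1, st_deriv_zero_of_gt hg3,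
        Real.smoothTransition.one_of_one_le hg1.le, Real.smoothTransition.one_of_one_le hg3.le]
      simp only [mul_zero, zero_mul, add_zero, zero_add, mul_one, one_mul, Quaternion.coe_zero,
        qexp_zero, qexp2_zero, mul_assoc, smul_mul_assoc, Quaternion.coe_mul_eq_smul]
  · beta_reduce
    rw [show (8:ℝ) / T * 0 - 1 = -1 by ring, show (8:ℝ) / T * 0 - 3 = -3 by ring,
      show (8:ℝ) / T * 0 - 6 = -6 by ring,
      Real.smoothTransition.zero_of_nonpos (by norm_num),
      Real.smoothTransition.zero_of_nonpos (by norm_num),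
      Real.smoothTransition.zero_of_nonpos (by norm_num)]
    simp [qexp_zero, qexp2_zero]
  · beta_reduce
    rw [show (8:ℝ) / T * T = 8 by field_simp,
      Real.smoothTransition.one_of_one_le (by norm_num : (1:ℝ) ≤ 8 - 1),
      Real.smoothTransition.one_of_one_le (by norm_num : (1:ℝ) ≤ 8 - 3),
      Real.smoothTransition.one_of_one_le (by norm_num : (1:ℝ) ≤ 8 - 6)]
    rw [mul_one, mul_one, mul_one]
    exact hdec
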